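/- For every real r ≥ 0, one has e^{−N r²} e_N(N r²) → 𝟙_{r<1} + (1/2)·𝟙_{r=1} as N → ∞. In particular, e^{−N} ∑_{ℓ=0}^{N−1} N^ℓ/ℓ! → 1/2 as N → ∞. -/

import Mathlib

open Filter

/-- Truncated exponential series `e_N(t) = ∑_{ℓ=0}^{N-1} tˡ/ℓ!`. -/
noncomputable def eN (N : ℕ) (t : ℝ) : ℝ := ∑ ℓ ∈ Finset.range N, t ^ ℓ / (Nat.factorial ℓ)

open Real MeasureTheory Set



lemma hasDerivAt_eN (M : ℕ) (t : ℝ) : HasDerivAt (eN (M + 1)) (eN M t) t := by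
  have h : ∀ ℓ ∈ Finset.range (M + 1), HasDerivAt (fun x : ℝ => x ^ ℓ / (Nat.factorial ℓ))
      ((ℓ : ℝ) * t ^ (ℓ - 1) / (Nat.factorial ℓ)) t := by
    intro ℓ _
    simpa [div_eq_mul_inv] using (hasDerivAt_pow ℓ t).mul_const ((Nat.factorial ℓ : ℝ)⁻¹)
  have := HasDerivAt.sum h
  convert this using 1
  · rfl
  · rfl
  · ext x; rw [Finset.sum_apply]; rfl
  rw [Finset.sum_range_succ']
  simp only [Nat.cast_zero, zero_mul, Nat.factorial_zero, Nat.cast_one, zero_div, add_zero]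
  unfold eN
  refine Finset.sum_congr rfl fun i _ => ?_
  rw [Nat.factorial_succ, Nat.add_sub_cancel]
  have : ((i:ℝ)+1) ≠ 0 := by positivity
  push_cast
  field_simp

lemma eN_succ_sub (M : ℕ) (t : ℝ) : eN (M + 1) t - eN M t = t ^ M / (Nat.factorial M) := by
  unfold eN; rw [Finset.sum_range_succ]; ring

lemma hasDerivAt_exp_eN (M : ℕ) (t : ℝ) :
    HasDerivAt (fun x => Real.exp (-x) * eN (M + 1) x) (-(Real.exp (-t) * t ^ M / (Nat.factorial M))) t := by
  have h1 : HasDerivAt (fun x : ℝ => Real.exp (-x)) (-Real.exp (-t)) t := by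
    simpa [Function.comp_def] using (Real.hasDerivAt_exp (-t)).comp t (hasDerivAt_neg t)
  have := h1.mul (hasDerivAt_eN M t)
  refine this.congr_deriv (Eq.symm ?_)
  have h2 := eN_succ_sub M t
  linear_combination Real.exp (-t) * h2

lemma tendsto_exp_eN_zero (M : ℕ) :
    Tendsto (fun x => Real.exp (-x) * eN (M + 1) x) atTop (nhds 0) := by
  have : ∀ x : ℝ, Real.exp (-x) * eN (M + 1) x
      = ∑ ℓ ∈ Finset.range (M + 1), (x ^ ℓ * Real.exp (-x)) / (Nat.factorial ℓ) := by
    intro x; unfold eN; rw [Finset.mul_sum]; refine Finset.sum_congr rfl fun i _ => ?_; ring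
  simp only [this]
  have : Tendsto (fun x : ℝ => ∑ ℓ ∈ Finset.range (M + 1), (x ^ ℓ * Real.exp (-x)) / (Nat.factorial ℓ))
      atTop (nhds (∑ ℓ ∈ Finset.range (M + 1), 0)) := by
    refine tendsto_finset_sum _ fun i _ => ?_
    simpa using (tendsto_pow_mul_exp_neg_atTop_nhds_zero i).div_const (Nat.factorial i : ℝ)
  simpa using this

lemma integrableOn_pow_exp (M : ℕ) {lam : ℝ} (hlam : 0 ≤ lam) :
    IntegrableOn (fun t : ℝ => t ^ M * Real.exp (-t)) (Ioi lam) := by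
  have h := (Real.GammaIntegral_convergent (s := (M + 1 : ℝ)) (by positivity)).mono_set
    (Ioi_subset_Ioi hlam)
  refine h.congr_fun (fun x hx => ?_) measurableSet_Ioi
  have hx0 : 0 < x := lt_of_le_of_lt hlam hx
  simp only [add_sub_cancel_right, Real.rpow_natCast]
  ring

/-- Key integral identity. -/
lemma integral_Ioi_pow_exp (M : ℕ) {lam : ℝ} (hlam : 0 ≤ lam) :
    ∫ t in Ioi lam, t ^ M * Real.exp (-t)
      = (Nat.factorial M) * (Real.exp (-lam) * eN (M + 1) lam) := by
  have key := integral_Ioi_of_hasDerivAt_of_tendsto'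
    (f := fun x => -(Nat.factorial M : ℝ) * (Real.exp (-x) * eN (M + 1) x))
    (f' := fun t => t ^ M * Real.exp (-t)) (a := lam) (m := 0)
    ?_ (integrableOn_pow_exp M hlam) ?_
  · rw [key]; ring
  · intro x hx
    have := (hasDerivAt_exp_eN M x).const_mul (-(Nat.factorial M : ℝ))
    refine this.congr_deriv (Eq.symm ?_)
    field_simp
  · simpa using (tendsto_exp_eN_zero M).const_mul (-(Nat.factorial M : ℝ))


lemma nonneg_of_deriv_nonneg {f f' : ℝ → ℝ} (h0 : f 0 = 0)
    (hd : ∀ v : ℝ, 0 ≤ v → HasDerivAt f (f' v) v) (hpos : ∀ v : ℝ, 0 < v → 0 ≤ f' v)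
    {v : ℝ} (hv : 0 ≤ v) : 0 ≤ f v := by
  have hmono : MonotoneOn f (Ici (0:ℝ)) := by
    refine monotoneOn_of_deriv_nonneg (convex_Ici 0) ?_ ?_ ?_
    · exact fun x hx => (hd x hx).continuousAt.continuousWithinAt
    · intro x hx
      rw [interior_Ici] at hx
      exact (hd x (le_of_lt hx)).differentiableAt.differentiableWithinAt
    · intro x hx
      rw [interior_Ici] at hx
      rw [(hd x (le_of_lt hx)).deriv]
      exact hpos x hx
  have := hmono (self_mem_Ici) hv hv
  rwa [h0] at this

lemma hasDerivAt_log1p {v : ℝ} (hv : 0 ≤ v) :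
    HasDerivAt (fun x : ℝ => Real.log (1 + x)) (1 / (1 + v)) v := by
  have h1 : (1 : ℝ) + v ≠ 0 := by positivity
  have := (Real.hasDerivAt_log h1).comp v ((hasDerivAt_id v).const_add 1)
  simpa [one_div, Function.comp_def] using this

lemma h_nonneg {v : ℝ} (hv : 0 ≤ v) : 0 ≤ v - Real.log (1 + v) := by
  have := Real.log_le_sub_one_of_pos (x := 1 + v) (by positivity)
  linarith

lemma h_le_sq {v : ℝ} (hv : 0 ≤ v) : v - Real.log (1 + v) ≤ v ^ 2 / 2 := by
  have key : 0 ≤ Real.log (1 + v) - v + v ^ 2 / 2 := by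
    refine nonneg_of_deriv_nonneg (f := fun x => Real.log (1 + x) - x + x ^ 2 / 2)
      (f' := fun x => 1 / (1 + x) - 1 + x) (by simp) ?_ ?_ hv
    · intro x hx
      have := ((hasDerivAt_log1p hx).sub (hasDerivAt_id x)).add
        ((hasDerivAt_pow 2 x).div_const 2)
      refine this.congr_deriv (Eq.symm ?_); push_cast; ring
    · intro x hx
      have h1 : (0:ℝ) < 1 + x := by linarith
      have h2 : 1 - x ≤ 1 / (1 + x) := by
        rw [le_div_iff₀ h1]; nlinarith
      linarith
  linarith

lemma h_ge_cub {v : ℝ} (hv : 0 ≤ v) : v ^ 2 / 2 - v ^ 3 / 3 ≤ v - Real.log (1 + v) := by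
  have key : 0 ≤ v - Real.log (1 + v) - v ^ 2 / 2 + v ^ 3 / 3 := by
    refine nonneg_of_deriv_nonneg (f := fun x => x - Real.log (1 + x) - x ^ 2 / 2 + x ^ 3 / 3)
      (f' := fun x => 1 - 1 / (1 + x) - x + x ^ 2) (by simp) ?_ ?_ hv
    · intro x hx
      have := (((hasDerivAt_id x).sub (hasDerivAt_log1p hx)).sub
        ((hasDerivAt_pow 2 x).div_const 2)).add ((hasDerivAt_pow 3 x).div_const 3)
      refine this.congr_deriv (Eq.symm ?_); push_cast; ring
    · intro x hx
      have h1 : (0:ℝ) < 1 + x := by linarith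
      have h2 : 1 / (1 + x) ≤ 1 - x + x ^ 2 := by
        rw [div_le_iff₀ h1]; nlinarith
      linarith
  linarith

lemma h_ge_frac {v : ℝ} (hv : 0 ≤ v) : v ^ 2 / (2 * (1 + v)) ≤ v - Real.log (1 + v) := by
  have key : 0 ≤ v - Real.log (1 + v) - v ^ 2 / (2 * (1 + v)) := by
    refine nonneg_of_deriv_nonneg
      (f := fun x => x - Real.log (1 + x) - x ^ 2 / (2 * (1 + x)))
      (f' := fun x => 1 - 1 / (1 + x) - (2 * x * (2 * (1 + x)) - x ^ 2 * 2) / (2 * (1 + x)) ^ 2)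
      (by simp) ?_ ?_ hv
    · intro x hx
      have h1 : (2 : ℝ) * (1 + x) ≠ 0 := by positivity
      have hden : HasDerivAt (fun x : ℝ => 2 * (1 + x)) 2 x := by
        simpa using ((hasDerivAt_id x).const_add 1).const_mul 2
      have := ((hasDerivAt_id x).sub (hasDerivAt_log1p hx)).sub
        ((hasDerivAt_pow 2 x).div hden h1)
      refine this.congr_deriv (Eq.symm ?_); push_cast; ring
    · intro x hx
      have h1 : (0:ℝ) < 1 + x := by linarith
      have e : 1 - 1 / (1 + x) - (2 * x * (2 * (1 + x)) - x ^ 2 * 2) / (2 * (1 + x)) ^ 2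
          = x ^ 2 / (2 * (1 + x) ^ 2) := by
        field_simp
        ring
      rw [e]
      positivity
  linarith



lemma eN_nonneg {N : ℕ} {t : ℝ} (ht : 0 ≤ t) : 0 ≤ eN N t := by
  unfold eN; positivity

lemma eN_le_exp {N : ℕ} {t : ℝ} (ht : 0 ≤ t) : eN N t ≤ Real.exp t :=
  Real.sum_le_exp_of_nonneg ht N

lemma exp_eq_tsum (x : ℝ) : Real.exp x = ∑' n : ℕ, x ^ n / (Nat.factorial n) := by
  rw [Real.exp_eq_exp_ℝ, NormedSpace.exp_eq_tsum_div]

lemma delta_pos {x : ℝ} (hx0 : 0 < x) (hx1 : x ≠ 1) : 0 < x - 1 - Real.log x := by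
  have := Real.log_lt_sub_one_of_pos hx0 hx1
  linarith

lemma exp_neg_nat_mul_tendsto {δ : ℝ} (hδ : 0 < δ) :
    Tendsto (fun N : ℕ => Real.exp (-(N : ℝ) * δ)) atTop (nhds 0) := by
  have h : ∀ N : ℕ, Real.exp (-(N : ℝ) * δ) = (Real.exp (-δ)) ^ N := by
    intro N; rw [← Real.exp_nat_mul]; ring_nf
  simp only [h]
  exact tendsto_pow_atTop_nhds_zero_of_lt_one (Real.exp_pos _).le
    (Real.exp_lt_one_iff.mpr (by linarith))

/-- Case `1 < x`. -/
lemma tendsto_case_gt {x : ℝ} (hx : 1 < x) :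
    Tendsto (fun N : ℕ => Real.exp (-(N : ℝ) * x) * eN N ((N : ℝ) * x)) atTop (nhds 0) := by
  have hx0 : 0 < x := by linarith
  set δ := x - 1 - Real.log x with hδdef
  have hδ : 0 < δ := delta_pos hx0 (by linarith)
  have hub : ∀ N : ℕ, Real.exp (-(N : ℝ) * x) * eN N ((N : ℝ) * x) ≤ Real.exp (-(N : ℝ) * δ) := by
    intro N
    have hsum : eN N ((N : ℝ) * x) ≤ Real.exp ((N:ℝ) * Real.log x) * eN N (N : ℝ) := by
      unfold eN
      rw [Finset.mul_sum]
      refine Finset.sum_le_sum fun ℓ hℓ => ?_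
      rw [Finset.mem_range] at hℓ
      have hfact : (0:ℝ) < Nat.factorial ℓ := by positivity
      rw [div_le_iff₀ hfact]
      have key : ((N : ℝ) * x) ^ ℓ ≤ Real.exp ((N:ℝ) * Real.log x) * (N : ℝ) ^ ℓ := by
        have hxl : x ^ ℓ ≤ Real.exp ((N:ℝ) * Real.log x) := by
          have : x ^ ℓ = Real.exp ((ℓ : ℝ) * Real.log x) := by
            rw [← Real.log_pow, Real.exp_log (by positivity)]
          rw [this]
          apply Real.exp_le_exp.mpr
          have hlog : 0 ≤ Real.log x := Real.log_nonneg hx.le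
          have : (ℓ : ℝ) ≤ N := by exact_mod_cast hℓ.le
          nlinarith
        calc ((N : ℝ) * x) ^ ℓ = x ^ ℓ * (N:ℝ) ^ ℓ := by ring
          _ ≤ Real.exp ((N:ℝ) * Real.log x) * (N : ℝ) ^ ℓ := by
              apply mul_le_mul_of_nonneg_right hxl (by positivity)
      calc ((N : ℝ) * x) ^ ℓ ≤ Real.exp ((N:ℝ) * Real.log x) * (N : ℝ) ^ ℓ := key
        _ = Real.exp ((N:ℝ) * Real.log x) * ((N : ℝ) ^ ℓ / Nat.factorial ℓ) * Nat.factorial ℓ := by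
            field_simp
    calc Real.exp (-(N : ℝ) * x) * eN N ((N : ℝ) * x)
        ≤ Real.exp (-(N : ℝ) * x) * (Real.exp ((N:ℝ) * Real.log x) * eN N (N : ℝ)) := by
          apply mul_le_mul_of_nonneg_left hsum (Real.exp_pos _).le
      _ ≤ Real.exp (-(N : ℝ) * x) * (Real.exp ((N:ℝ) * Real.log x) * Real.exp (N:ℝ)) := by
          have h0 := eN_le_exp (N := N) (t := (N:ℝ)) (Nat.cast_nonneg N)
          have h1 : (0:ℝ) ≤ Real.exp (-(N : ℝ) * x) := (Real.exp_pos _).le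
          have h2 : (0:ℝ) ≤ Real.exp ((N:ℝ) * Real.log x) := (Real.exp_pos _).le
          exact mul_le_mul_of_nonneg_left (mul_le_mul_of_nonneg_left h0 h2) h1
      _ = Real.exp (-(N : ℝ) * δ) := by
          rw [← Real.exp_add, ← Real.exp_add]
          congr 1
          rw [hδdef]; ring
  have hlb : ∀ N : ℕ, 0 ≤ Real.exp (-(N : ℝ) * x) * eN N ((N : ℝ) * x) := by
    intro N
    have : (0:ℝ) ≤ (N : ℝ) * x := by positivity
    have := eN_nonneg (N := N) this
    positivity
  exact tendsto_of_tendsto_of_tendsto_of_le_of_le tendsto_const_nhds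
    (exp_neg_nat_mul_tendsto hδ) hlb hub

/-- Case `0 < x < 1`. -/
lemma tendsto_case_lt {x : ℝ} (hx0 : 0 < x) (hx : x < 1) :
    Tendsto (fun N : ℕ => Real.exp (-(N : ℝ) * x) * eN N ((N : ℝ) * x)) atTop (nhds 1) := by
  set δ := x - 1 - Real.log x with hδdef
  have hδ : 0 < δ := delta_pos hx0 (by linarith)
  have hub : ∀ N : ℕ, Real.exp (-(N : ℝ) * x) * eN N ((N : ℝ) * x) ≤ 1 := by
    intro N
    have h1 : eN N ((N:ℝ)*x) ≤ Real.exp ((N:ℝ)*x) := eN_le_exp (by positivity)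
    calc Real.exp (-(N : ℝ) * x) * eN N ((N : ℝ) * x)
        ≤ Real.exp (-(N : ℝ) * x) * Real.exp ((N:ℝ)*x) :=
          mul_le_mul_of_nonneg_left h1 (Real.exp_pos _).le
      _ = 1 := by rw [← Real.exp_add]; simp
  have hlb : ∀ N : ℕ, 1 - Real.exp (-(N : ℝ) * δ) ≤
      Real.exp (-(N : ℝ) * x) * eN N ((N : ℝ) * x) := by
    intro N
    set lam := (N : ℝ) * x with hlam
    have hlam0 : 0 ≤ lam := by positivity
    -- tail bound: exp lam - eN N lam ≤ exp (N log x + N)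
    have htail : Real.exp lam - eN N lam ≤ Real.exp ((N:ℝ) * Real.log x + (N:ℝ)) := by
      have hsummable : Summable (fun n : ℕ => lam ^ n / (Nat.factorial n : ℝ)) :=
        Real.summable_pow_div_factorial lam
      have hsplit := Summable.sum_add_tsum_nat_add (f := fun n : ℕ => lam ^ n / (Nat.factorial n : ℝ)) N
        hsummable
      have heq : Real.exp lam - eN N lam = ∑' k : ℕ, lam ^ (k + N) / (Nat.factorial (k + N)) := by
        rw [exp_eq_tsum]
        unfold eN
        linarith [hsplit]
      rw [heq]
      -- bound each term: lam^(k+N)/(k+N)! ≤ exp(N log x) * N^(k+N)/(k+N)!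
      have hterm : ∀ k : ℕ, lam ^ (k + N) / (Nat.factorial (k + N) : ℝ)
          ≤ Real.exp ((N:ℝ) * Real.log x) * ((N:ℝ) ^ (k + N) / (Nat.factorial (k + N))) := by
        intro k
        have hfact : (0:ℝ) < Nat.factorial (k + N) := by positivity
        rw [div_le_iff₀ hfact]
        have hxl : x ^ (k + N) ≤ Real.exp ((N:ℝ) * Real.log x) := by
          have : x ^ (k + N) = Real.exp (((k + N : ℕ) : ℝ) * Real.log x) := by
            rw [← Real.log_pow, Real.exp_log (by positivity)]
          rw [this]
          apply Real.exp_le_exp.mpr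
          have hlog : Real.log x < 0 := Real.log_neg hx0 hx
          have : (N : ℝ) ≤ ((k + N : ℕ) : ℝ) := by push_cast; linarith [Nat.cast_nonneg (α := ℝ) k]
          nlinarith
        calc lam ^ (k + N) = x ^ (k + N) * (N:ℝ) ^ (k + N) := by rw [hlam]; ring
          _ ≤ Real.exp ((N:ℝ) * Real.log x) * (N:ℝ) ^ (k + N) := by
              apply mul_le_mul_of_nonneg_right hxl (by positivity)
          _ = Real.exp ((N:ℝ) * Real.log x) * ((N:ℝ) ^ (k + N) / Nat.factorial (k + N))
              * Nat.factorial (k + N) := by field_simp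
      have hsum2 : Summable (fun k : ℕ => lam ^ (k + N) / (Nat.factorial (k + N) : ℝ)) :=
        (summable_nat_add_iff N).mpr hsummable
      have hsum3 : Summable (fun k : ℕ =>
          Real.exp ((N:ℝ) * Real.log x) * ((N:ℝ) ^ (k + N) / (Nat.factorial (k + N) : ℝ))) :=
        ((summable_nat_add_iff N).mpr (Real.summable_pow_div_factorial (N:ℝ))).mul_left _
      calc (∑' k : ℕ, lam ^ (k + N) / (Nat.factorial (k + N) : ℝ))
          ≤ ∑' k : ℕ, Real.exp ((N:ℝ) * Real.log x) * ((N:ℝ) ^ (k + N) / (Nat.factorial (k + N))) :=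
            Summable.tsum_le_tsum hterm hsum2 hsum3
        _ = Real.exp ((N:ℝ) * Real.log x) *
            ∑' k : ℕ, ((N:ℝ) ^ (k + N) / (Nat.factorial (k + N) : ℝ)) := tsum_mul_left
        _ ≤ Real.exp ((N:ℝ) * Real.log x) * Real.exp (N : ℝ) := by
            apply mul_le_mul_of_nonneg_left _ (Real.exp_pos _).le
            have hsplit2 := Summable.sum_add_tsum_nat_add (f := fun n : ℕ => (N:ℝ) ^ n / (Nat.factorial n : ℝ)) N
              (Real.summable_pow_div_factorial (N:ℝ))
            have hpos : (0:ℝ) ≤ ∑ i ∈ Finset.range N, (N:ℝ) ^ i / (Nat.factorial i : ℝ) := by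
              positivity
            rw [exp_eq_tsum]
            linarith
        _ = Real.exp ((N:ℝ) * Real.log x + (N:ℝ)) := by rw [← Real.exp_add]
    -- now conclude
    have hkey : 1 - Real.exp (-(N : ℝ) * x) * eN N lam
        = Real.exp (-lam) * (Real.exp lam - eN N lam) := by
      rw [mul_sub, ← Real.exp_add]
      simp [hlam]
    have : Real.exp (-lam) * (Real.exp lam - eN N lam)
        ≤ Real.exp (-lam) * Real.exp ((N:ℝ) * Real.log x + (N:ℝ)) :=
      mul_le_mul_of_nonneg_left htail (Real.exp_pos _).le
    rw [← Real.exp_add] at this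
    have hexp_eq : -lam + ((N:ℝ) * Real.log x + (N:ℝ)) = -(N:ℝ) * δ := by
      rw [hlam, hδdef]; ring
    rw [hexp_eq] at this
    linarith [hkey]
  have h1 : Tendsto (fun N : ℕ => 1 - Real.exp (-(N : ℝ) * δ)) atTop (nhds 1) := by
    have := (exp_neg_nat_mul_tendsto hδ).const_sub 1
    simpa using this
  exact tendsto_of_tendsto_of_tendsto_of_le_of_le h1 tendsto_const_nhds hlb hub


lemma tendsto_sqrt_atTop : Tendsto Real.sqrt atTop atTop := by
  refine tendsto_atTop_atTop.mpr fun b => ⟨max 0 (b ^ 2), fun x hx => ?_⟩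
  have h1 : (0:ℝ) ≤ x := le_trans (le_max_left _ _) hx
  have h2 : b ^ 2 ≤ x := le_trans (le_max_right _ _) hx
  calc b ≤ |b| := le_abs_self b
    _ = Real.sqrt (b ^ 2) := (Real.sqrt_sq_eq_abs b).symm
    _ ≤ Real.sqrt x := Real.sqrt_le_sqrt h2

/-- Translation of an `Ioi` integral. -/
lemma integral_Ioi_comp_add_right (f : ℝ → ℝ) (c : ℝ) :
    ∫ t in Ioi c, f t = ∫ w in Ioi (0:ℝ), f (w + c) := by
  have h := MeasurePreserving.setIntegral_image_emb
    (measurePreserving_add_right (volume : Measure ℝ) c)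
    (Homeomorph.addRight c).isClosedEmbedding.measurableEmbedding f (Ioi 0)
  rw [← h]
  congr 1
  rw [image_add_const_Ioi, zero_add]

/-- The substitution `t = N(1+v)` in the incomplete gamma integral. -/
lemma integral_subst (M : ℕ) :
    ∫ t in Ioi ((M + 1 : ℕ) : ℝ), t ^ M * Real.exp (-t)
      = ((M + 1 : ℕ) : ℝ) ^ (M + 1) * Real.exp (-((M + 1 : ℕ) : ℝ)) *
        ∫ v in Ioi (0:ℝ), Real.exp (-(M : ℝ) * (v - Real.log (1 + v))) * Real.exp (-v) := by
  set N : ℝ := ((M + 1 : ℕ) : ℝ) with hN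
  have hNpos : (0:ℝ) < N := by rw [hN]; positivity
  have hscale := integral_comp_mul_left_Ioi (fun w => (w + N) ^ M * Real.exp (-(w + N))) 0 hNpos
  rw [mul_zero] at hscale
  have step2 : ∫ w in Ioi (0:ℝ), (w + N) ^ M * Real.exp (-(w + N))
      = N * ∫ v in Ioi (0:ℝ), (N * v + N) ^ M * Real.exp (-(N * v + N)) := by
    rw [hscale, smul_eq_mul, ← mul_assoc, mul_inv_cancel₀ (ne_of_gt hNpos), one_mul]
  have step3 : ∫ v in Ioi (0:ℝ), (N * v + N) ^ M * Real.exp (-(N * v + N))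
      = (N ^ M * Real.exp (-N)) *
        ∫ v in Ioi (0:ℝ), Real.exp (-(M : ℝ) * (v - Real.log (1 + v))) * Real.exp (-v) := by
    rw [← MeasureTheory.integral_const_mul]
    refine MeasureTheory.setIntegral_congr_fun measurableSet_Ioi fun v hv => ?_
    have hv0 : 0 < v := hv
    have h1v : (0:ℝ) < 1 + v := by linarith
    have hNv : N * v + N = N * (1 + v) := by ring
    rw [hNv, mul_pow]
    have hlog : (1 + v) ^ M = Real.exp ((M : ℝ) * Real.log (1 + v)) := by
      rw [← Real.log_pow, Real.exp_log (by positivity)]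
    have harg : N = (M:ℝ) + 1 := by rw [hN]; push_cast; ring
    rw [hlog, mul_assoc, mul_assoc, ← Real.exp_add, ← Real.exp_add, ← Real.exp_add]
    congr 2
    rw [harg]; ring
  rw [integral_Ioi_comp_add_right (fun t => t ^ M * Real.exp (-t)) N, step2, step3, pow_succ]
  ring


noncomputable def JJ (M : ℕ) : ℝ :=
  ∫ v in Ioi (0:ℝ), Real.exp (-(M : ℝ) * (v - Real.log (1 + v))) * Real.exp (-v)

/-- Scaling `v = s / √M`. -/
lemma sqrt_mul_JJ (M : ℕ) (hM : 1 ≤ M) :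
    Real.sqrt M * JJ M = ∫ s in Ioi (0:ℝ),
      Real.exp (-(M : ℝ) * ((Real.sqrt M)⁻¹ * s - Real.log (1 + (Real.sqrt M)⁻¹ * s)))
        * Real.exp (-((Real.sqrt M)⁻¹ * s)) := by
  have hMpos : (0:ℝ) < Real.sqrt M := Real.sqrt_pos.mpr (by exact_mod_cast hM)
  have hinv : (0:ℝ) < (Real.sqrt M)⁻¹ := inv_pos.mpr hMpos
  have h := integral_comp_mul_left_Ioi
    (fun v => Real.exp (-(M : ℝ) * (v - Real.log (1 + v))) * Real.exp (-v)) 0 hinv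
  rw [mul_zero] at h
  rw [h, smul_eq_mul, inv_inv]
  rfl

lemma exponent_bound_lower (M : ℕ) (hM : 1 ≤ M) {s : ℝ} (hs : 0 < s) :
    (s - 1) / 2 ≤ (M : ℝ) * ((Real.sqrt M)⁻¹ * s - Real.log (1 + (Real.sqrt M)⁻¹ * s)) := by
  have hM1 : (1:ℝ) ≤ (M:ℝ) := by exact_mod_cast hM
  have hsq : Real.sqrt (M:ℝ) ^ 2 = (M:ℝ) := Real.sq_sqrt (by linarith)
  have hsqrt1 : (1:ℝ) ≤ Real.sqrt M := by
    rw [show (1:ℝ) = Real.sqrt 1 from (Real.sqrt_one).symm]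
    exact Real.sqrt_le_sqrt hM1
  have hsqrtpos : (0:ℝ) < Real.sqrt M := by linarith
  set c : ℝ := (Real.sqrt M)⁻¹ with hc
  have hc0 : 0 < c := inv_pos.mpr hsqrtpos
  have hc1 : c ≤ 1 := by
    rw [hc]; exact inv_le_one_of_one_le₀ hsqrt1
  have hcs : 0 ≤ c * s := by positivity
  have h1 := h_ge_frac hcs
  have hMc2 : (M:ℝ) * c ^ 2 = 1 := by
    rw [hc, ← hsq]; field_simp; rw [Real.sqrt_sq hsqrtpos.le]
  have key : s ^ 2 / (2 * (1 + s)) ≤ (M:ℝ) * (c * s - Real.log (1 + c * s)) := by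
    have h2 : (M:ℝ) * ((c * s) ^ 2 / (2 * (1 + c * s))) ≤ (M:ℝ) * (c * s - Real.log (1 + c * s)) :=
      mul_le_mul_of_nonneg_left h1 (by linarith)
    have h3 : (M:ℝ) * ((c * s) ^ 2 / (2 * (1 + c * s))) = s ^ 2 / (2 * (1 + c * s)) := by
      field_simp
      nlinarith [hMc2]
    rw [h3] at h2
    have h4 : s ^ 2 / (2 * (1 + s)) ≤ s ^ 2 / (2 * (1 + c * s)) := by
      apply div_le_div_of_nonneg_left (by positivity) (by nlinarith) (by nlinarith)
    linarith
  have hfinal : (s - 1) / 2 ≤ s ^ 2 / (2 * (1 + s)) := by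
    rw [div_le_div_iff₀ (by norm_num) (by nlinarith)]
    nlinarith
  linarith

lemma bound_integrable : IntegrableOn (fun s : ℝ => Real.exp ((1:ℝ)/2) * Real.exp (-(1/2 : ℝ) * s))
    (Ioi (0:ℝ)) :=
  (exp_neg_integrableOn_Ioi 0 (by norm_num : (0:ℝ) < 1/2)).const_mul _

lemma tendsto_inv_sqrt_zero :
    Tendsto (fun n : ℕ => (Real.sqrt ((n + 1 : ℕ) : ℝ))⁻¹) atTop (nhds 0) := by
  apply tendsto_inv_atTop_zero.comp
  exact _root_.tendsto_sqrt_atTop.comp (tendsto_natCast_atTop_atTop.comp (tendsto_add_atTop_nat 1))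

lemma tendsto_sqrt_JJ :
    Tendsto (fun M : ℕ => Real.sqrt M * JJ M) atTop (nhds (Real.sqrt (π / (1/2)) / 2)) := by
  rw [← tendsto_add_atTop_iff_nat 1]
  have heq : ∀ n : ℕ, Real.sqrt ((n+1 : ℕ) : ℝ) * JJ (n+1) = ∫ s in Ioi (0:ℝ),
      Real.exp (-((n+1 : ℕ) : ℝ) * ((Real.sqrt ((n+1:ℕ)))⁻¹ * s
        - Real.log (1 + (Real.sqrt ((n+1:ℕ)))⁻¹ * s)))
        * Real.exp (-((Real.sqrt ((n+1:ℕ)))⁻¹ * s)) :=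
    fun n => sqrt_mul_JJ (n+1) (Nat.le_add_left 1 n)
  simp only [heq]
  have hgauss : ∫ s in Ioi (0:ℝ), Real.exp (-(1/2 : ℝ) * s ^ 2) = Real.sqrt (π / (1/2)) / 2 :=
    integral_gaussian_Ioi (1/2)
  rw [← hgauss]
  refine MeasureTheory.tendsto_integral_of_dominated_convergence
    (fun s : ℝ => Real.exp ((1:ℝ)/2) * Real.exp (-(1/2 : ℝ) * s)) ?_ bound_integrable ?_ ?_
  · intro n
    apply Measurable.aestronglyMeasurable
    have hlog : Measurable fun x : ℝ => Real.log (1 + (Real.sqrt ((n+1:ℕ)))⁻¹ * x) :=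
      Real.measurable_log.comp (measurable_const.add (measurable_const.mul measurable_id))
    exact (Real.measurable_exp.comp (measurable_const.mul
      ((measurable_const.mul measurable_id).sub hlog))).mul
      (Real.measurable_exp.comp (measurable_const.mul measurable_id).neg)
  · intro n
    rw [ae_restrict_iff' measurableSet_Ioi]
    refine ae_of_all _ fun s hs => ?_
    have hs0 : 0 < s := hs
    set c : ℝ := (Real.sqrt ((n+1:ℕ)))⁻¹ with hc
    have hM1 : (1:ℝ) ≤ ((n+1:ℕ):ℝ) := by exact_mod_cast Nat.le_add_left 1 n
    have hc0 : 0 < c := by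
      rw [hc]; apply inv_pos.mpr; apply Real.sqrt_pos.mpr; linarith
    have hA := exponent_bound_lower (n+1) (Nat.le_add_left 1 n) hs0
    rw [Real.norm_eq_abs, abs_of_pos (by positivity)]
    have h1 : Real.exp (-((n+1 : ℕ) : ℝ) * (c * s - Real.log (1 + c * s)))
        ≤ Real.exp (-((s-1)/2)) := by
      apply Real.exp_le_exp.mpr
      have := hA
      linarith
    have h2 : Real.exp (-(c * s)) ≤ 1 := Real.exp_le_one_iff.mpr (by nlinarith)
    calc Real.exp (-((n+1 : ℕ) : ℝ) * (c * s - Real.log (1 + c * s))) * Real.exp (-(c * s))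
        ≤ Real.exp (-((s-1)/2)) * 1 := by
          apply mul_le_mul h1 h2 (Real.exp_pos _).le (Real.exp_pos _).le
      _ = Real.exp ((1:ℝ)/2) * Real.exp (-(1/2 : ℝ) * s) := by
          rw [mul_one, ← Real.exp_add]; congr 1; ring
  · rw [ae_restrict_iff' measurableSet_Ioi]
    refine ae_of_all _ fun s hs => ?_
    have hs0 : 0 < s := hs
    -- show the exponent tends to s^2/2
    have hexp_tendsto : Tendsto (fun n : ℕ =>
        ((n+1 : ℕ) : ℝ) * ((Real.sqrt ((n+1:ℕ)))⁻¹ * s - Real.log (1 + (Real.sqrt ((n+1:ℕ)))⁻¹ * s))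
          + (Real.sqrt ((n+1:ℕ)))⁻¹ * s) atTop (nhds (s ^ 2 / 2)) := by
      have hck : Tendsto (fun n : ℕ => (Real.sqrt ((n+1:ℕ)))⁻¹) atTop (nhds 0) :=
        tendsto_inv_sqrt_zero
      have hlower : Tendsto (fun n : ℕ => s ^ 2 / 2 - (Real.sqrt ((n+1:ℕ)))⁻¹ * s ^ 3 / 3)
          atTop (nhds (s ^ 2 / 2)) := by
        have := ((hck.mul_const (s ^ 3)).div_const 3).const_sub (s ^ 2 / 2)
        simpa using this
      have hupper : Tendsto (fun n : ℕ => s ^ 2 / 2 + (Real.sqrt ((n+1:ℕ)))⁻¹ * s)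
          atTop (nhds (s ^ 2 / 2)) := by
        have := (hck.mul_const s).const_add (s ^ 2 / 2)
        simpa using this
      refine tendsto_of_tendsto_of_tendsto_of_le_of_le hlower hupper ?_ ?_
      · intro n
        set c : ℝ := (Real.sqrt ((n+1:ℕ)))⁻¹ with hc
        have hM1 : (1:ℝ) ≤ ((n+1:ℕ):ℝ) := by exact_mod_cast Nat.le_add_left 1 n
        have hsqp : (0:ℝ) < Real.sqrt ((n+1:ℕ)) := Real.sqrt_pos.mpr (by linarith)
        have hc0 : 0 < c := by rw [hc]; exact inv_pos.mpr hsqp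
        have hsq : Real.sqrt (((n+1:ℕ)):ℝ) ^ 2 = ((n+1:ℕ):ℝ) := Real.sq_sqrt (by linarith)
        have hMc2 : ((n+1:ℕ):ℝ) * c ^ 2 = 1 := by rw [hc, ← hsq]; field_simp; rw [Real.sqrt_sq hsqp.le]
        have hcs : 0 ≤ c * s := by positivity
        have h1 := h_ge_cub hcs
        have step : ((n+1:ℕ):ℝ) * ((c*s) ^ 2 / 2 - (c*s) ^ 3 / 3)
            ≤ ((n+1:ℕ):ℝ) * (c * s - Real.log (1 + c * s)) :=
          mul_le_mul_of_nonneg_left h1 (by linarith)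
        have hident : ((n+1:ℕ):ℝ) * ((c*s) ^ 2 / 2 - (c*s) ^ 3 / 3)
            = s ^ 2 / 2 * (((n+1:ℕ):ℝ) * c ^ 2) - c * s ^ 3 / 3 * (((n+1:ℕ):ℝ) * c ^ 2) := by ring
        rw [hident, hMc2, mul_one, mul_one] at step
        have hcs0 : 0 ≤ c * s := hcs
        calc s ^ 2 / 2 - c * s ^ 3 / 3 ≤ ((n+1:ℕ):ℝ) * (c * s - Real.log (1 + c * s)) := step
          _ ≤ ((n+1:ℕ):ℝ) * (c * s - Real.log (1 + c * s)) + c * s := by linarith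
      · intro n
        set c : ℝ := (Real.sqrt ((n+1:ℕ)))⁻¹ with hc
        have hM1 : (1:ℝ) ≤ ((n+1:ℕ):ℝ) := by exact_mod_cast Nat.le_add_left 1 n
        have hsqp : (0:ℝ) < Real.sqrt ((n+1:ℕ)) := Real.sqrt_pos.mpr (by linarith)
        have hc0 : 0 < c := by rw [hc]; exact inv_pos.mpr hsqp
        have hsq : Real.sqrt (((n+1:ℕ)):ℝ) ^ 2 = ((n+1:ℕ):ℝ) := Real.sq_sqrt (by linarith)
        have hMc2 : ((n+1:ℕ):ℝ) * c ^ 2 = 1 := by rw [hc, ← hsq]; field_simp; rw [Real.sqrt_sq hsqp.le]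
        have hcs : 0 ≤ c * s := by positivity
        have h1 := h_le_sq hcs
        have step : ((n+1:ℕ):ℝ) * (c * s - Real.log (1 + c * s))
            ≤ ((n+1:ℕ):ℝ) * ((c*s) ^ 2 / 2) :=
          mul_le_mul_of_nonneg_left h1 (by linarith)
        have hident : ((n+1:ℕ):ℝ) * ((c*s) ^ 2 / 2) = s ^ 2 / 2 * (((n+1:ℕ):ℝ) * c ^ 2) := by ring
        rw [hident, hMc2, mul_one] at step
        linarith
    have : Tendsto (fun n : ℕ => Real.exp (-(((n+1 : ℕ) : ℝ) *
        ((Real.sqrt ((n+1:ℕ)))⁻¹ * s - Real.log (1 + (Real.sqrt ((n+1:ℕ)))⁻¹ * s))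
          + (Real.sqrt ((n+1:ℕ)))⁻¹ * s))) atTop (nhds (Real.exp (-(s ^ 2 / 2)))) :=
      (Real.continuous_exp.tendsto _).comp hexp_tendsto.neg
    have hfinal : Real.exp (-(s ^ 2 / 2)) = Real.exp (-(1/2 : ℝ) * s ^ 2) := by ring_nf
    rw [hfinal] at this
    refine this.congr fun n => ?_
    rw [← Real.exp_add]
    congr 1
    ring

lemma stirling_A_eq (M : ℕ) (hM : 1 ≤ M) :
    ((M + 1 : ℕ) : ℝ) ^ (M + 1) * Real.exp (-((M + 1 : ℕ) : ℝ)) / (Nat.factorial M * Real.sqrt M)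
      = Real.sqrt (1 + 1 / (M : ℝ)) * (Real.sqrt 2 * Stirling.stirlingSeq (M + 1))⁻¹ := by
  have hM0 : (0:ℝ) < (M:ℝ) := by exact_mod_cast hM
  set N : ℝ := ((M + 1 : ℕ) : ℝ) with hN
  have hN0 : (0:ℝ) < N := by rw [hN]; positivity
  have hNM : N = (M:ℝ) + 1 := by rw [hN]; push_cast; ring
  have hsqM : (0:ℝ) < Real.sqrt M := Real.sqrt_pos.mpr hM0
  have hs := Stirling.stirlingSeq'_pos M
  have hsdef : Stirling.stirlingSeq (M + 1)
      = (Nat.factorial (M + 1) : ℝ) / (Real.sqrt (2 * ((M+1:ℕ):ℝ)) * (((M+1:ℕ):ℝ) / Real.exp 1) ^ (M + 1)) := rfl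
  have hfrac : Real.sqrt (1 + 1 / (M : ℝ)) = Real.sqrt N / Real.sqrt M := by
    have h1 : 1 + 1 / (M:ℝ) = N / M := by rw [hNM]; field_simp
    rw [h1, Real.sqrt_div hN0.le]
  have h2N : Real.sqrt (2 * N) = Real.sqrt 2 * Real.sqrt N := Real.sqrt_mul (by norm_num) N
  have hpow : (N / Real.exp 1) ^ (M+1) = N ^ (M+1) / Real.exp N := by
    rw [div_pow, Real.exp_one_pow, hN]
  have hfact : (Nat.factorial (M+1) : ℝ) = ((M+1:ℕ):ℝ) * Nat.factorial M := by
    push_cast [Nat.factorial_succ]; ring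
  have hexpneg : Real.exp (-N) = (Real.exp N)⁻¹ := Real.exp_neg N
  have hNN : Real.sqrt N * Real.sqrt N = N := Real.mul_self_sqrt hN0.le
  rw [hfrac, hsdef, h2N, hpow, hfact, hexpneg]
  have hfac0 : (Nat.factorial M : ℝ) ≠ 0 := by positivity
  have hexp0 : Real.exp N ≠ 0 := (Real.exp_pos N).ne'
  have hsq2 : Real.sqrt 2 ≠ 0 := by positivity
  field_simp
  ring_nf
  rw [Real.sq_sqrt hN0.le, hNM]
  push_cast; ring

lemma tendsto_stirling_A :
    Tendsto (fun M : ℕ => ((M+1:ℕ):ℝ)^(M+1) * Real.exp (-((M+1:ℕ):ℝ))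
      / (Nat.factorial M * Real.sqrt M)) atTop (nhds ((Real.sqrt 2 * Real.sqrt π)⁻¹)) := by
  have hB : Tendsto (fun M : ℕ => Real.sqrt (1 + 1/(M:ℝ))
      * (Real.sqrt 2 * Stirling.stirlingSeq (M+1))⁻¹) atTop
      (nhds (1 * (Real.sqrt 2 * Real.sqrt π)⁻¹)) := by
    apply Tendsto.mul
    · have h1 : Tendsto (fun M : ℕ => 1 + 1/(M:ℝ)) atTop (nhds 1) := by
        simpa using (tendsto_one_div_atTop_nhds_zero_nat).const_add (1:ℝ)
      have h2 := (Real.continuous_sqrt.tendsto 1).comp h1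
      simpa [Function.comp_def] using h2
    · apply Tendsto.inv₀
      · exact (Stirling.tendsto_stirlingSeq_sqrt_pi.comp (tendsto_add_atTop_nat 1)).const_mul _
      · have : (0:ℝ) < Real.sqrt 2 * Real.sqrt π := by
          apply mul_pos (Real.sqrt_pos.mpr (by norm_num)) (Real.sqrt_pos.mpr Real.pi_pos)
        exact this.ne'
  rw [one_mul] at hB
  refine Tendsto.congr' ?_ hB
  filter_upwards [eventually_ge_atTop 1] with M hM
  exact (stirling_A_eq M hM).symm

lemma case_eq_one : Tendsto (fun N : ℕ => Real.exp (-(N:ℝ)) * eN N ((N:ℝ))) atTop (nhds (1/2)) := by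
  rw [← tendsto_add_atTop_iff_nat 1]
  have hlim := tendsto_stirling_A.mul tendsto_sqrt_JJ
  have hval : (Real.sqrt 2 * Real.sqrt π)⁻¹ * (Real.sqrt (π / (1/2)) / 2) = 1/2 := by
    have h1 : π / (1/2 : ℝ) = 2 * π := by ring
    rw [h1, Real.sqrt_mul (by norm_num : (0:ℝ) ≤ 2)]
    have h2 : (0:ℝ) < Real.sqrt 2 * Real.sqrt π :=
      mul_pos (Real.sqrt_pos.mpr (by norm_num)) (Real.sqrt_pos.mpr Real.pi_pos)
    field_simp
  rw [hval] at hlim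
  refine Tendsto.congr' ?_ hlim
  filter_upwards [eventually_ge_atTop 1] with M hM
  have hM0 : (0:ℝ) < (M:ℝ) := by exact_mod_cast hM
  have hsqM : (0:ℝ) < Real.sqrt M := Real.sqrt_pos.mpr hM0
  have hint := integral_Ioi_pow_exp M (lam := ((M+1:ℕ):ℝ)) (by positivity)
  rw [integral_subst M] at hint
  have hint2 : ((M+1:ℕ):ℝ)^(M+1) * Real.exp (-((M+1:ℕ):ℝ)) * JJ M
      = (Nat.factorial M : ℝ) * (Real.exp (-((M+1:ℕ):ℝ)) * eN (M+1) ((M+1:ℕ):ℝ)) := by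
    unfold JJ
    exact hint
  have hfac0 : (Nat.factorial M : ℝ) ≠ 0 := by positivity
  set E := Real.exp (-((M+1:ℕ):ℝ)) with hE
  set P := ((M+1:ℕ):ℝ)^(M+1) with hP
  set J := JJ M with hJdef
  set S := Real.sqrt (M:ℝ) with hS
  set ee := eN (M+1) ((M+1:ℕ):ℝ) with hee
  field_simp
  linear_combination hint2 - (1 - S) * E * J * hP

lemma eN_zero {N : ℕ} (hN : 1 ≤ N) : eN N 0 = 1 := by
  unfold eN
  rw [Finset.sum_eq_single_of_mem 0 (Finset.mem_range.mpr hN)]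
  · simp
  · intro b _ hb
    simp [zero_pow hb]

theorem stmt19_proof :
    (∀ r : ℝ, 0 ≤ r →
      Tendsto (fun N : ℕ => Real.exp (-(N : ℝ) * r ^ 2) * eN N ((N : ℝ) * r ^ 2)) atTop
        (nhds (if r < 1 then 1 else if r = 1 then 1 / 2 else 0)))
    ∧ Tendsto
        (fun N : ℕ => Real.exp (-(N : ℝ)) * ∑ ℓ ∈ Finset.range N, (N : ℝ) ^ ℓ / (Nat.factorial ℓ))
        atTop (nhds (1 / 2)) := by
  constructor
  · intro r hr
    rcases lt_trichotomy r 1 with hlt | heq | hgt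
    · rw [if_pos hlt]
      rcases eq_or_lt_of_le hr with h0 | h0
      · refine Tendsto.congr' ?_ (tendsto_const_nhds : Tendsto (fun _ : ℕ => (1:ℝ)) atTop (nhds 1))
        filter_upwards [eventually_ge_atTop 1] with N hN
        rw [← h0]
        simp [eN_zero hN]
      · have hx0 : 0 < r ^ 2 := by positivity
        have hx1 : r ^ 2 < 1 := by nlinarith
        exact tendsto_case_lt hx0 hx1
    · subst heq
      rw [if_neg (lt_irrefl 1), if_pos rfl]
      simpa using case_eq_one
    · rw [if_neg (by linarith), if_neg (by linarith)]
      have hx : 1 < r ^ 2 := by nlinarith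
      exact tendsto_case_gt hx
  · exact case_eq_one

/-- For every `r ≥ 0`, `e^{-Nr²} e_N(Nr²) → 𝟙_{r<1} + (1/2)𝟙_{r=1}` as `N → ∞`;
in particular `e^{-N} ∑_{ℓ=0}^{N-1} Nˡ/ℓ! → 1/2`. -/
theorem stmt19 :
    (∀ r : ℝ, 0 ≤ r →
      Tendsto (fun N : ℕ => Real.exp (-(N : ℝ) * r ^ 2) * eN N ((N : ℝ) * r ^ 2)) atTop
        (nhds (if r < 1 then 1 else if r = 1 then 1 / 2 else 0)))
    ∧ Tendsto
        (fun N : ℕ => Real.exp (-(N : ℝ)) * ∑ ℓ ∈ Finset.range N, (N : ℝ) ^ ℓ / (Nat.factorial ℓ))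
        atTop (nhds (1 / 2)) := by
  exact stmt19_proof
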